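/- Let N ≥ 1 be an integer, let X have the Gamma(N,1) distribution and let U be an independent exponential random variable with rate λ > 0. Then lim_{s→0⁺} s^{−N} · Prob( X < (U+1)·s ) = Σ_{n=0}^{N} λ^{−n} / (N−n)!. -/

import Mathlib

open MeasureTheory ProbabilityTheory Filter

open Real Set
open scoped ENNReal NNReal

lemma gamma_Iio_eq {N : ℕ} (hN : 1 ≤ N) {t : ℝ} (ht : 0 ≤ t) :
    gammaMeasure N 1 (Set.Iio t)
      = ENNReal.ofReal (∫ x in Set.Ioo 0 t,
          x ^ (N - 1) * Real.exp (-x) / (N - 1).factorial) := by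
  have hcont : Continuous (fun x : ℝ => x ^ (N-1) * Real.exp (-x) / (N-1).factorial) := by
    continuity
  have hInt : IntegrableOn (fun x : ℝ => x ^ (N-1) * Real.exp (-x) / (N-1).factorial)
      (Set.Ioo 0 t) := by
    exact (hcont.continuousOn.integrableOn_Icc).mono_set Set.Ioo_subset_Icc_self
  have hpdf : ∀ x ∈ Set.Ioo (0:ℝ) t, gammaPDF N 1 x
      = ENNReal.ofReal (x ^ (N-1) * Real.exp (-x) / (N-1).factorial) := by
    intro x hx
    rw [gammaPDF_of_nonneg hx.1.le]
    congr 1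
    have hN' : ((N : ℝ)) = ((N - 1 : ℕ) : ℝ) + 1 := by
      push_cast [Nat.cast_sub hN]; ring
    rw [Real.one_rpow, hN', Real.Gamma_nat_eq_factorial]
    rw [show ((N-1:ℕ):ℝ) + 1 - 1 = ((N-1:ℕ):ℝ) by ring, Real.rpow_natCast]
    rw [one_mul]
    ring
  rw [gammaMeasure, withDensity_apply _ measurableSet_Iio]
  have hsplit : ∫⁻ x in Set.Iio t, gammaPDF N 1 x = ∫⁻ x in Set.Ioo 0 t, gammaPDF N 1 x := by
    rw [← Set.Iio_union_Ico_eq_Iio ht, lintegral_union measurableSet_Ico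
      (by simp [Set.disjoint_left]; intro a h1 h2; linarith)]
    have h0 : ∫⁻ x in Set.Iio (0:ℝ), gammaPDF N 1 x = 0 := by
      rw [setLIntegral_congr_fun_ae measurableSet_Iio
        (ae_of_all _ (fun x (hx : x < 0) => gammaPDF_of_neg hx))]
      simp
    rw [h0, zero_add, setLIntegral_congr (MeasureTheory.Ioo_ae_eq_Ico (a := (0:ℝ)) (b := t)).symm]
  rw [hsplit, setLIntegral_congr_fun_ae measurableSet_Ioo (ae_of_all _ hpdf)]
  rw [← ofReal_integral_eq_lintegral_ofReal hInt (by
    filter_upwards [ae_restrict_mem measurableSet_Ioo] with x hx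
    have : (0:ℝ) ≤ x := hx.1.le
    positivity)]

lemma gamma_Iio_bounds {N : ℕ} (hN : 1 ≤ N) {t : ℝ} (ht : 0 ≤ t) :
    Real.exp (-t) * (t ^ N / N.factorial) ≤ (gammaMeasure N 1 (Set.Iio t)).toReal ∧
    (gammaMeasure N 1 (Set.Iio t)).toReal ≤ t ^ N / N.factorial := by
  have hfac : (N.factorial : ℝ) = N * (N-1).factorial := by
    exact_mod_cast (Nat.mul_factorial_pred (by omega)).symm
  have hNpos : (0:ℝ) < N := by exact_mod_cast hN
  have hcont : Continuous (fun x : ℝ => x ^ (N-1) * Real.exp (-x) / (N-1).factorial) := by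
    continuity
  have hInt : IntegrableOn (fun x : ℝ => x ^ (N-1) * Real.exp (-x) / (N-1).factorial)
      (Set.Ioo 0 t) :=
    (hcont.continuousOn.integrableOn_Icc).mono_set Set.Ioo_subset_Icc_self
  have hcont2 : Continuous (fun x : ℝ => x ^ (N-1) / (N-1).factorial) := by continuity
  have hInt2 : IntegrableOn (fun x : ℝ => x ^ (N-1) / (N-1).factorial) (Set.Ioo 0 t) :=
    (hcont2.continuousOn.integrableOn_Icc).mono_set Set.Ioo_subset_Icc_self
  have hInt3 : IntegrableOn (fun x : ℝ => Real.exp (-t) * (x ^ (N-1) / (N-1).factorial))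
      (Set.Ioo 0 t) := hInt2.const_mul _
  have hpow : (∫ x in Set.Ioo (0:ℝ) t, x ^ (N-1)) = t ^ N / N := by
    rw [setIntegral_congr_set (MeasureTheory.Ioo_ae_eq_Ioc (a := (0:ℝ)) (b := t)),
      ← intervalIntegral.integral_of_le ht, integral_pow,
      (by omega : N - 1 + 1 = N), zero_pow (by omega : N ≠ 0), sub_zero]
    congr 1
    push_cast [Nat.cast_sub hN]
    ring
  have hval2 : ∫ x in Set.Ioo (0:ℝ) t, x ^ (N-1) / (N-1).factorial = t ^ N / N.factorial := by
    rw [integral_div, hpow, hfac]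
    field_simp
  have hnn : 0 ≤ ∫ x in Set.Ioo (0:ℝ) t, x ^ (N-1) * Real.exp (-x) / (N-1).factorial := by
    apply setIntegral_nonneg measurableSet_Ioo
    intro x hx
    have : (0:ℝ) ≤ x := hx.1.le
    positivity
  rw [gamma_Iio_eq hN ht, ENNReal.toReal_ofReal hnn]
  constructor
  · have heq : Real.exp (-t) * (t ^ N / N.factorial)
        = ∫ x in Set.Ioo (0:ℝ) t, Real.exp (-t) * (x ^ (N-1) / (N-1).factorial) := by
      rw [integral_const_mul, hval2]
    rw [heq]
    apply setIntegral_mono_on hInt3 hInt measurableSet_Ioo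
    intro x hx
    have h1 : Real.exp (-t) ≤ Real.exp (-x) := Real.exp_le_exp.2 (by linarith [hx.2])
    have h2 : (0:ℝ) ≤ x ^ (N-1) / (N-1).factorial := by
      have := hx.1.le; positivity
    calc Real.exp (-t) * (x ^ (N-1) / (N-1).factorial)
        ≤ Real.exp (-x) * (x ^ (N-1) / (N-1).factorial) :=
          mul_le_mul_of_nonneg_right h1 h2
      _ = x ^ (N-1) * Real.exp (-x) / (N-1).factorial := by ring
  · rw [← hval2]
    apply setIntegral_mono_on hInt hInt2 measurableSet_Ioo
    intro x hx
    have h1 : Real.exp (-x) ≤ 1 := Real.exp_le_one_iff.2 (by linarith [hx.1])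
    have h2 : (0:ℝ) ≤ x ^ (N-1) := by have := hx.1.le; positivity
    calc x ^ (N-1) * Real.exp (-x) / (N-1).factorial
        ≤ x ^ (N-1) * 1 / (N-1).factorial := by
          gcongr
      _ = x ^ (N-1) / (N-1).factorial := by ring

lemma tendsto_gamma_ratio {N : ℕ} (hN : 1 ≤ N) {v : ℝ} (hv : 0 < v) :
    Tendsto (fun s : ℝ => (s ^ N)⁻¹ * (gammaMeasure N 1 (Set.Iio (v * s))).toReal)
      (nhdsWithin 0 (Set.Ioi 0)) (nhds (v ^ N / N.factorial)) := by
  have hlow : Tendsto (fun s : ℝ => Real.exp (-(v * s)) * (v ^ N / N.factorial))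
      (nhdsWithin 0 (Set.Ioi 0)) (nhds (v ^ N / N.factorial)) := by
    have hc : Continuous fun s : ℝ => Real.exp (-(v*s)) * (v^N/(N.factorial:ℝ)) := by
      continuity
    have h := (hc.tendsto 0).mono_left (nhdsWithin_le_nhds (s := Set.Ioi (0:ℝ)))
    simpa using h
  apply tendsto_of_tendsto_of_tendsto_of_le_of_le' hlow tendsto_const_nhds
  · filter_upwards [self_mem_nhdsWithin] with s hs
    have hs' : (0:ℝ) < s := hs
    have hvs : 0 ≤ v * s := by positivity
    have hb := (gamma_Iio_bounds hN hvs).1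
    have halg : Real.exp (-(v*s)) * (v ^ N / N.factorial)
        = (s^N)⁻¹ * (Real.exp (-(v*s)) * ((v*s)^N / N.factorial)) := by
      rw [mul_pow]
      field_simp
    rw [halg]
    exact mul_le_mul_of_nonneg_left hb (by positivity)
  · filter_upwards [self_mem_nhdsWithin] with s hs
    have hs' : (0:ℝ) < s := hs
    have hvs : 0 ≤ v * s := by positivity
    have hb := (gamma_Iio_bounds hN hvs).2
    have halg : (s^N)⁻¹ * ((v*s)^N / N.factorial) = v ^ N / N.factorial := by
      rw [mul_pow]
      field_simp
    calc (s ^ N)⁻¹ * (gammaMeasure N 1 (Set.Iio (v * s))).toReal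
        ≤ (s^N)⁻¹ * ((v*s)^N / N.factorial) :=
          mul_le_mul_of_nonneg_left hb (by positivity)
      _ = v ^ N / N.factorial := halg

lemma exponentialPDFReal_eq (r x : ℝ) :
    exponentialPDFReal r x = if 0 ≤ x then r * Real.exp (-(r*x)) else 0 := by
  rw [exponentialPDFReal, gammaPDFReal]
  simp only [Real.rpow_one, Real.Gamma_one, div_one, sub_self, Real.rpow_zero, mul_one]

lemma integral_g_expMeasure {lam : ℝ} (hlam : 0 < lam) (g : ℝ → ℝ) :
    ∫ u, g u ∂(expMeasure lam) = ∫ u, exponentialPDFReal lam u * g u := by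
  have hm : Measurable fun x => (exponentialPDFReal lam x).toNNReal :=
    (measurable_exponentialPDFReal lam).stronglyMeasurable.real_toNNReal.measurable
  have hid : expMeasure lam
      = volume.withDensity (fun x => ((exponentialPDFReal lam x).toNNReal : ℝ≥0∞)) := rfl
  rw [hid, integral_withDensity_eq_integral_smul hm]
  congr 1
  funext u
  rw [NNReal.smul_def, Real.coe_toNNReal _ (exponentialPDFReal_nonneg hlam u), smul_eq_mul]

lemma integrable_g_expMeasure {lam : ℝ} (hlam : 0 < lam) (g : ℝ → ℝ)
    (h : Integrable (fun u => exponentialPDFReal lam u * g u)) :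
    Integrable g (expMeasure lam) := by
  have hm : Measurable fun x => (exponentialPDFReal lam x).toNNReal :=
    (measurable_exponentialPDFReal lam).stronglyMeasurable.real_toNNReal.measurable
  have hid : expMeasure lam
      = volume.withDensity (fun x => ((exponentialPDFReal lam x).toNNReal : ℝ≥0∞)) := rfl
  rw [hid, integrable_withDensity_iff_integrable_smul hm]
  refine (integrable_congr (ae_of_all _ fun u => ?_)).mp h
  rw [NNReal.smul_def, Real.coe_toNNReal _ (exponentialPDFReal_nonneg hlam u), smul_eq_mul]

lemma pdf_mul_pow_eq {lam : ℝ} (k : ℕ) :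
    (fun u : ℝ => exponentialPDFReal lam u * u ^ k)
      = Set.indicator (Set.Ici 0) (fun u => lam * Real.exp (-(lam*u)) * u ^ k) := by
  funext u
  rw [exponentialPDFReal_eq]
  by_cases hu : (0:ℝ) ≤ u
  · rw [if_pos hu, Set.indicator_of_mem (Set.mem_Ici.mpr hu)]
  · rw [if_neg hu, Set.indicator_of_notMem (by simpa using hu), zero_mul]

lemma integrableOn_Ioi_pdf_mul_pow {lam : ℝ} (hlam : 0 < lam) (k : ℕ) :
    IntegrableOn (fun u : ℝ => lam * Real.exp (-(lam*u)) * u ^ k) (Set.Ioi 0) := by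
  have hk : (-1:ℝ) < (k:ℝ) := lt_of_lt_of_le neg_one_lt_zero (Nat.cast_nonneg k)
  have h := integrableOn_rpow_mul_exp_neg_mul_rpow hk zero_lt_one hlam
  refine MeasureTheory.IntegrableOn.congr_fun (h.const_mul lam) ?_ measurableSet_Ioi
  intro x hx
  simp only [Real.rpow_one, Real.rpow_natCast]
  ring_nf

lemma integrable_pdf_mul_pow {lam : ℝ} (hlam : 0 < lam) (k : ℕ) :
    Integrable (fun u : ℝ => exponentialPDFReal lam u * u ^ k) := by
  rw [pdf_mul_pow_eq, integrable_indicator_iff measurableSet_Ici]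
  exact (integrableOn_Ioi_pdf_mul_pow hlam k).congr_set_ae Ioi_ae_eq_Ici.symm

lemma integral_pdf_mul_pow {lam : ℝ} (hlam : 0 < lam) (k : ℕ) :
    ∫ u : ℝ, exponentialPDFReal lam u * u ^ k = k.factorial / lam ^ k := by
  rw [pdf_mul_pow_eq, integral_indicator measurableSet_Ici, integral_Ici_eq_integral_Ioi]
  have hk : (0:ℝ) < (k:ℝ) + 1 := by positivity
  have h := Real.integral_rpow_mul_exp_neg_mul_Ioi hk hlam
  simp only [add_sub_cancel_right, Real.rpow_natCast] at h
  have hG : Real.Gamma ((k:ℝ) + 1) = k.factorial := Real.Gamma_nat_eq_factorial k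
  rw [hG] at h
  have hcast : ((k:ℝ)+1) = ((k+1:ℕ):ℝ) := by push_cast; ring
  rw [hcast, Real.rpow_natCast] at h
  have : (fun u : ℝ => lam * Real.exp (-(lam*u)) * u ^ k)
      = (fun u : ℝ => lam * (u ^ k * Real.exp (-(lam*u)))) := by funext u; ring
  rw [this, MeasureTheory.integral_const_mul, h]
  rw [one_div, inv_pow, pow_succ]
  field_simp

lemma integrable_pow_expMeasure {lam : ℝ} (hlam : 0 < lam) (k : ℕ) :
    Integrable (fun u : ℝ => u ^ k) (expMeasure lam) :=
  integrable_g_expMeasure hlam _ (integrable_pdf_mul_pow hlam k)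

lemma integral_pow_expMeasure {lam : ℝ} (hlam : 0 < lam) (k : ℕ) :
    ∫ u, u ^ k ∂(expMeasure lam) = k.factorial / lam ^ k := by
  rw [integral_g_expMeasure hlam, integral_pdf_mul_pow hlam]

lemma bound_fun_eq (N : ℕ) : (fun u : ℝ => (u+1)^N / N.factorial)
    = fun u => ∑ k ∈ Finset.range (N+1), ((N.choose k : ℝ) / N.factorial) * u^k := by
  funext u
  rw [add_pow, Finset.sum_div]
  apply Finset.sum_congr rfl
  intro k hk
  rw [one_pow]
  ring

lemma integrable_bound_expMeasure {lam : ℝ} (hlam : 0 < lam) (N : ℕ) :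
    Integrable (fun u : ℝ => (u+1)^N / N.factorial) (expMeasure lam) := by
  rw [bound_fun_eq]
  exact integrable_finset_sum _
    (fun k _ => (integrable_pow_expMeasure hlam k).const_mul _)

lemma integral_bound_expMeasure {lam : ℝ} (hlam : 0 < lam) (N : ℕ) :
    ∫ u, (u+1)^N / N.factorial ∂(expMeasure lam)
      = ∑ n ∈ Finset.range (N+1), (lam ^ n)⁻¹ / ((N - n).factorial : ℝ) := by
  rw [bound_fun_eq,
    integral_finset_sum _ (fun k _ => (integrable_pow_expMeasure hlam k).const_mul _)]
  apply Finset.sum_congr rfl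
  intro k hk
  rw [MeasureTheory.integral_const_mul, integral_pow_expMeasure hlam]
  have hkN : k ≤ N := Nat.lt_succ_iff.mp (Finset.mem_range.mp hk)
  have hfac : ((N.choose k : ℝ)) * k.factorial * (N - k).factorial = N.factorial := by
    exact_mod_cast Nat.choose_mul_factorial_mul_factorial hkN
  have h1 : (N.factorial : ℝ) ≠ 0 := Nat.cast_ne_zero.mpr (Nat.factorial_ne_zero N)
  have h2 : ((N - k).factorial : ℝ) ≠ 0 := Nat.cast_ne_zero.mpr (Nat.factorial_ne_zero _)
  have h3 : (lam : ℝ) ^ k ≠ 0 := pow_ne_zero _ hlam.ne'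
  field_simp
  linear_combination hfac

/-- High-SNR (small `s`) behavior of the first-hop SINR c.d.f. of the MRC/MRT scheme
(eq. (67) in the proof of Theorem 5): if `X ~ Gamma(N,1)` and `U ~ Exp(λ)` are independent,
then `s^{−N} · Prob(X < (U+1)s) → Σ_{n=0}^{N} λ^{−n}/(N−n)!` as `s → 0⁺`. -/
theorem cdf_first_hop_sinr_mrc_small_s
    {Ω : Type*} [MeasureSpace Ω] [IsProbabilityMeasure (ℙ : Measure Ω)]
    (N : ℕ) (hN : 1 ≤ N) (lam : ℝ) (hlam : 0 < lam) (X U : Ω → ℝ)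
    (hXU : IndepFun X U ℙ)
    (hX : Measure.map X ℙ = gammaMeasure N 1)
    (hU : Measure.map U ℙ = expMeasure lam) :
    Tendsto (fun s : ℝ => (s ^ N)⁻¹ * (ℙ {ω | X ω < (U ω + 1) * s}).toReal)
      (nhdsWithin 0 (Set.Ioi 0))
      (nhds (∑ n ∈ Finset.range (N + 1),
        (lam ^ n)⁻¹ / (Nat.factorial (N - n) : ℝ))) := by
  have hNpos : (0:ℝ) < N := by exact_mod_cast hN
  have hμprob : IsProbabilityMeasure (gammaMeasure N 1) :=
    isProbabilityMeasure_gammaMeasure hNpos zero_lt_one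
  have hνprob : IsProbabilityMeasure (expMeasure lam) :=
    isProbabilityMeasure_gammaMeasure zero_lt_one hlam
  have hXm : AEMeasurable X ℙ := by
    by_contra h
    have h1 := hμprob.measure_univ
    rw [← hX, Measure.map_of_not_aemeasurable h] at h1
    simp at h1
  have hUm : AEMeasurable U ℙ := by
    by_contra h
    have h1 := hνprob.measure_univ
    rw [← hU, Measure.map_of_not_aemeasurable h] at h1
    simp at h1
  have hmap : Measure.map (fun ω => (X ω, U ω)) ℙ
      = (gammaMeasure N 1).prod (expMeasure lam) := by
    rw [← hX, ← hU]
    exact (indepFun_iff_map_prod_eq_prod_map_map hXm hUm).mp hXU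
  -- the probability as an integral over the exponential measure
  have key : ∀ s : ℝ, 0 < s → (ℙ {ω | X ω < (U ω + 1) * s}).toReal
      = ∫ u, (gammaMeasure N 1 (Set.Iio ((u + 1) * s))).toReal ∂(expMeasure lam) := by
    intro s hs
    have hset : MeasurableSet {p : ℝ × ℝ | p.1 < (p.2 + 1) * s} :=
      measurableSet_lt measurable_fst ((measurable_snd.add_const 1).mul_const s)
    have h1 : ℙ {ω | X ω < (U ω + 1) * s}
        = ((gammaMeasure N 1).prod (expMeasure lam)) {p : ℝ × ℝ | p.1 < (p.2 + 1) * s} := by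
      rw [← hmap, Measure.map_apply_of_aemeasurable (hXm.prodMk hUm) hset]
      rfl
    rw [h1, Measure.prod_apply_symm hset]
    have hpre : ∀ u : ℝ, (fun x : ℝ => (x, u)) ⁻¹' {p : ℝ × ℝ | p.1 < (p.2 + 1) * s}
        = Set.Iio ((u+1)*s) := fun u => rfl
    simp_rw [hpre]
    rw [← integral_toReal]
    · apply Measurable.aemeasurable
      apply Monotone.measurable
      intro a b hab
      exact measure_mono (Set.Iio_subset_Iio (by nlinarith))
    · exact ae_of_all _ (fun u => measure_lt_top _ _)
  -- a.e. positivity for the exponential measure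
  have hae_pos : ∀ᵐ u ∂(expMeasure lam), 0 < u := by
    have hIio : expMeasure lam (Set.Iio 0) = 0 := by
      rw [expMeasure, gammaMeasure, withDensity_apply _ measurableSet_Iio]
      exact lintegral_gammaPDF_of_nonpos le_rfl
    have h0 : expMeasure lam {(0:ℝ)} = 0 :=
      (withDensity_absolutelyContinuous _ _) (measure_singleton 0)
    have hIic : expMeasure lam (Set.Iic 0) = 0 := by
      have hset : Set.Iic (0:ℝ) = Set.Iio 0 ∪ {0} := by
        ext x; simp [le_iff_lt_or_eq]
      rw [hset]
      exact measure_union_null hIio h0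
    rw [ae_iff]
    convert hIic using 2
    ext u
    simp
  -- dominated convergence
  have hDCT : Tendsto
      (fun s : ℝ => ∫ u, (s ^ N)⁻¹ * (gammaMeasure N 1 (Set.Iio ((u + 1) * s))).toReal
        ∂(expMeasure lam))
      (nhdsWithin 0 (Set.Ioi 0))
      (nhds (∫ u, (u+1)^N / N.factorial ∂(expMeasure lam))) := by
    apply tendsto_integral_filter_of_dominated_convergence
      (fun u : ℝ => (u+1)^N / N.factorial)
    · filter_upwards [self_mem_nhdsWithin] with s hs
      have hmono : Monotone (fun u : ℝ => (gammaMeasure N 1 (Set.Iio ((u + 1) * s))).toReal) := by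
        intro a b hab
        apply ENNReal.toReal_mono (measure_ne_top _ _)
        exact measure_mono (Set.Iio_subset_Iio (by nlinarith [Set.mem_Ioi.mp hs]))
      exact (hmono.measurable.aestronglyMeasurable).const_mul _
    · filter_upwards [self_mem_nhdsWithin] with s hs
      filter_upwards [hae_pos] with u hu
      have hs' : (0:ℝ) < s := hs
      have hvs : 0 ≤ (u+1) * s := by nlinarith
      have hb := (gamma_Iio_bounds hN hvs).2
      have hnn : 0 ≤ (s ^ N)⁻¹ * (gammaMeasure N 1 (Set.Iio ((u + 1) * s))).toReal := by
        positivity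
      rw [Real.norm_eq_abs, abs_of_nonneg hnn]
      have halg : (s^N)⁻¹ * (((u+1)*s)^N / N.factorial) = (u+1) ^ N / N.factorial := by
        rw [mul_pow]
        field_simp
      calc (s ^ N)⁻¹ * (gammaMeasure N 1 (Set.Iio ((u + 1) * s))).toReal
          ≤ (s^N)⁻¹ * (((u+1)*s)^N / N.factorial) :=
            mul_le_mul_of_nonneg_left hb (by positivity)
        _ = (u+1) ^ N / N.factorial := halg
    · exact integrable_bound_expMeasure hlam N
    · filter_upwards [hae_pos] with u hu
      exact tendsto_gamma_ratio hN (by linarith : (0:ℝ) < u + 1)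
  rw [integral_bound_expMeasure hlam N] at hDCT
  apply Tendsto.congr' _ hDCT
  filter_upwards [self_mem_nhdsWithin] with s hs
  rw [MeasureTheory.integral_const_mul, ← key s hs]
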